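/- Let L ≥ 1, N a positive even integer, Δx = L/N ≤ 1, let ĥ : 𝒦 → ℝ, let V : 𝒳 → ℝ be a lattice function with discrete Fourier transform V̂, and define the matrix Ĥ on ℓ²(𝒦) by Ĥ_{kl} = ĥ_k δ_{kl} + (1/L) V̂_{k−l}. Assume λ ∈ ℂ is such that Ĝ = (λ − Ĥ)⁻¹ exists with matrix 2-norm ‖Ĝ‖. Then, denoting by (1 + ĥ) the diagonal matrix with entries 1 + ĥ_k, one has ‖ Ĝ (1 + ĥ) ‖ ≤ 1 + ‖Ĝ‖ ( |1 + λ| + √(2π) ‖V‖_{L^∞(𝒳)} ), where ‖·‖ is the operator norm on ℓ²(𝒦). -/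

import Mathlib

open scoped BigOperators Real
open MeasureTheory

noncomputable section

/-- The periodic distance `min_{k ∈ ℤ} |x - L k|`. -/
def dtilde (L x : ℝ) : ℝ := sInf {r : ℝ | ∃ k : ℤ, r = |x - L * k|}

/-- The mollified periodic distance `d_L(x, 0)`. -/
def dmol (L x : ℝ) : ℝ :=
  Real.sqrt (L ^ 2 / 4 + 1) -
    Real.sqrt ((Real.sqrt (L ^ 2 / 4 + 1) - Real.sqrt (dtilde L x ^ 2 + 1)) ^ 2 + 1)

/-- The mollified periodic distance `d_L(x, y)`. -/
def dL (L x y : ℝ) : ℝ := dmol L (x - y)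

/-- The grid point `x_i = i Δx`, with `Δx = L / N`. -/
def gridX (L : ℝ) (N : ℕ) (i : ZMod N) : ℝ := (ZMod.val i : ℝ) * (L / N)

/-- Forward difference operator on periodic lattice functions. -/
def Dplus {N : ℕ} (dx : ℝ) (f : ZMod N → ℂ) : ZMod N → ℂ :=
  fun i => (f (i + 1) - f i) / (dx : ℂ)

/-- Backward difference operator on periodic lattice functions. -/
def Dminus {N : ℕ} (dx : ℝ) (f : ZMod N → ℂ) : ZMod N → ℂ :=
  fun i => (f i - f (i - 1)) / (dx : ℂ)

/-- Second order finite difference Laplacian `Δ = 𝒟⁺𝒟⁻`. -/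
def discLap {N : ℕ} (dx : ℝ) (f : ZMod N → ℂ) : ZMod N → ℂ :=
  Dplus dx (Dminus dx f)

/-- Weighted `ℓ²` norm `(w Σ |f i|²)^{1/2}`; with `w = Δx` this is `‖·‖_{L²(𝒳)}`,
with `w = Δk` this is `‖·‖_{L²(𝒦)}`. -/
def wnorm {N : ℕ} [NeZero N] (w : ℝ) (f : ZMod N → ℂ) : ℝ :=
  Real.sqrt (w * ∑ i : ZMod N, ‖f i‖ ^ 2)

/-- The Fourier grid point `k = n Δk` with `n ∈ (-N/2, N/2]` corresponding to `j ∈ ZMod N`. -/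
def kval (L : ℝ) (N : ℕ) (j : ZMod N) : ℝ :=
  ((if (ZMod.val j : ℤ) ≤ (N : ℤ) / 2 then (ZMod.val j : ℤ) else (ZMod.val j : ℤ) - (N : ℤ)) : ℝ) *
    (2 * Real.pi / L)

/-- Discrete Fourier transform `f̂_k = Δx Σ_x e^{-i k x} f(x)`. -/
def dft (L : ℝ) {N : ℕ} [NeZero N] (f : ZMod N → ℂ) (j : ZMod N) : ℂ :=
  ((L / N : ℝ) : ℂ) *
    ∑ i : ZMod N, Complex.exp (-Complex.I * (kval L N j : ℂ) * ((gridX L N i : ℝ) : ℂ)) * f i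

/-- Inverse discrete Fourier transform `f(x) = (1/L) Σ_k e^{i k x} f̂_k`. -/
def idft (L : ℝ) {N : ℕ} [NeZero N] (fh : ZMod N → ℂ) (i : ZMod N) : ℂ :=
  ((1 / L : ℝ) : ℂ) *
    ∑ j : ZMod N, Complex.exp (Complex.I * (kval L N j : ℂ) * ((gridX L N i : ℝ) : ℂ)) * fh j

/-- Periodic difference operator on the Fourier grid, `(𝒟 f̂)_k = (f̂_k - f̂_{k-Δk})/Δk`. -/
def Dk {N : ℕ} (dk : ℝ) (fh : ZMod N → ℂ) : ZMod N → ℂ :=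
  fun j => (fh j - fh (j - 1)) / (dk : ℂ)

/-- Real-valued version of the periodic difference operator on the Fourier grid. -/
def DkR {N : ℕ} (dk : ℝ) (fh : ZMod N → ℝ) : ZMod N → ℝ :=
  fun j => (fh j - fh (j - 1)) / dk

/-- The distance `d(x,0)`: equal to `x` on `[0, L/2)` and `L - x` on `[L/2, L)`. -/
def dfun (L x : ℝ) : ℝ := if x < L / 2 then x else L - x

/-- The mollified symbol `ĥ_k = θ̂(k)(k² - k_c²) + k_c²` on the Fourier grid, `k_c = π N / L`. -/
def hsym (L : ℝ) (N : ℕ) (θ : ℝ → ℝ) (j : ZMod N) : ℝ :=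
  θ (kval L N j) * ((kval L N j) ^ 2 - (Real.pi * N / L) ^ 2) + (Real.pi * N / L) ^ 2

/-- The Fourier space Hamiltonian matrix `Ĥ_{kl} = ĥ_k δ_{kl} + (1/L) V̂_{k-l}`. -/
def Hmat (L : ℝ) {N : ℕ} [NeZero N] (hh : ZMod N → ℝ) (V : ZMod N → ℝ) :
    Matrix (ZMod N) (ZMod N) ℂ :=
  Matrix.of fun k l =>
    (if k = l then (hh k : ℂ) else 0) + ((1 / L : ℝ) : ℂ) * dft L (fun i => (V i : ℂ)) (k - l)

end

noncomputable section Aux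

set_option linter.unusedSectionVars false

/-- `e^{2πia/N}`. -/
def Efun (N : ℕ) (a : ℤ) : ℂ := Complex.exp (2 * Real.pi * Complex.I * a / N)

lemma Efun_congr {N : ℕ} [NeZero N] {a b : ℤ} (h : (a : ZMod N) = b) : Efun N a = Efun N b := by
  have hd : (N : ℤ) ∣ a - b := by
    rwa [← ZMod.intCast_zmod_eq_zero_iff_dvd, Int.cast_sub, sub_eq_zero]
  obtain ⟨t, ht⟩ := hd
  have ha : a = b + N * t := by omega
  have hN : (N : ℂ) ≠ 0 := Nat.cast_ne_zero.2 (NeZero.ne N)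
  unfold Efun
  rw [ha]
  push_cast
  rw [show 2 * (Real.pi:ℂ) * Complex.I * (b + N * t) / N
      = 2 * (Real.pi:ℂ) * Complex.I * b / N + t * (2 * Real.pi * Complex.I) by
    field_simp]
  rw [Complex.exp_add, Complex.exp_int_mul_two_pi_mul_I, mul_one]

lemma Efun_add (N : ℕ) (a b : ℤ) : Efun N (a + b) = Efun N a * Efun N b := by
  unfold Efun
  rw [← Complex.exp_add]
  congr 1
  push_cast
  ring

lemma Efun_zero (N : ℕ) : Efun N 0 = 1 := by
  simp [Efun]

lemma Efun_conj (N : ℕ) (a : ℤ) : (starRingEnd ℂ) (Efun N a) = Efun N (-a) := by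
  unfold Efun
  rw [← Complex.exp_conj]
  congr 1
  rw [map_div₀, map_mul, map_mul, map_mul, Complex.conj_I, Complex.conj_ofReal]
  push_cast
  simp only [map_ofNat, map_intCast, map_natCast]
  ring

lemma Efun_nat_mul (N : ℕ) (c : ℕ) (a : ℤ) : Efun N (c * a) = Efun N a ^ c := by
  unfold Efun
  rw [← Complex.exp_nat_mul]
  congr 1
  push_cast
  ring

lemma Efun_pow_N {N : ℕ} [NeZero N] (a : ℤ) : Efun N a ^ N = 1 := by
  rw [← Efun_nat_mul]
  exact Efun_congr (by push_cast; simp) |>.trans (Efun_zero N)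

lemma Efun_ne_one {N : ℕ} [NeZero N] {m : ZMod N} (hm : m ≠ 0) :
    Efun N (ZMod.val m) ≠ 1 := by
  intro h
  rw [Efun, Complex.exp_eq_one_iff] at h
  obtain ⟨n, hn⟩ := h
  have hvpos : 0 < ZMod.val m := (ZMod.val_pos).2 hm
  have hvlt : ZMod.val m < N := ZMod.val_lt m
  have hI : (Complex.I : ℂ) ≠ 0 := Complex.I_ne_zero
  have hpi : (Real.pi : ℂ) ≠ 0 := by exact_mod_cast Real.pi_ne_zero
  have hNc : (N : ℂ) ≠ 0 := Nat.cast_ne_zero.2 (NeZero.ne N)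
  have h2 : (2 : ℂ) * Real.pi * Complex.I ≠ 0 := by simp [hpi, hI]
  have key : ((ZMod.val m : ℤ) : ℂ) = (n : ℂ) * N := by
    field_simp at hn
    apply mul_left_cancel₀ h2
    rw [hn]
    ring
  have keyZ : (ZMod.val m : ℤ) = n * N := by exact_mod_cast key
  rcases le_or_gt n 0 with hn0 | hn0
  · nlinarith [keyZ]
  · nlinarith [keyZ]

/-- The symmetric character matrix `e2 k i = e^{2πi val(k) val(i)/N}`. -/
def e2 (N : ℕ) (k i : ZMod N) : ℂ := Efun N ((ZMod.val k : ℤ) * (ZMod.val i : ℤ))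

lemma e2_symm (N : ℕ) (k i : ZMod N) : e2 N k i = e2 N i k := by
  rw [e2, e2, mul_comm]

lemma e2_neg {N : ℕ} [NeZero N] (i l : ZMod N) :
    e2 N i (-l) = (starRingEnd ℂ) (e2 N i l) := by
  rw [e2, e2, Efun_conj]
  refine Efun_congr ?_
  push_cast
  simp [ZMod.natCast_val, ZMod.intCast_cast]

lemma sum_val {N : ℕ} [NeZero N] (f : ℕ → ℂ) :
    ∑ k : ZMod N, f (ZMod.val k) = ∑ j ∈ Finset.range N, f j := by
  refine Finset.sum_nbij' (fun k => ZMod.val k) (fun j => (j : ZMod N)) ?_ ?_ ?_ ?_ ?_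
  · intro a _; exact Finset.mem_range.2 (ZMod.val_lt a)
  · intro a _; exact Finset.mem_univ _
  · intro a _; simp [ZMod.natCast_val, ZMod.cast_id]
  · intro a ha; exact ZMod.val_cast_of_lt (Finset.mem_range.1 ha)
  · intro a _; rfl

lemma sum_Efun {N : ℕ} [NeZero N] (m : ZMod N) :
    ∑ k : ZMod N, Efun N ((ZMod.val k : ℤ) * (ZMod.val m : ℤ)) =
      if m = 0 then (N : ℂ) else 0 := by
  by_cases hm : m = 0
  · simp [hm, Efun_zero]
  · rw [if_neg hm]
    have h1 : ∀ k : ZMod N, Efun N ((ZMod.val k : ℤ) * (ZMod.val m : ℤ))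
        = Efun N (ZMod.val m) ^ (ZMod.val k) := fun k => Efun_nat_mul N _ _
    simp only [h1]
    rw [sum_val (fun j => Efun N (ZMod.val m) ^ j), geom_sum_eq (Efun_ne_one hm),
      Efun_pow_N, sub_self, zero_div]

lemma orth {N : ℕ} [NeZero N] (i j : ZMod N) :
    ∑ k : ZMod N, (starRingEnd ℂ) (e2 N k i) * e2 N k j =
      if i = j then (N : ℂ) else 0 := by
  have h1 : ∀ k : ZMod N, (starRingEnd ℂ) (e2 N k i) * e2 N k j
      = Efun N ((ZMod.val k : ℤ) * (ZMod.val (j - i) : ℤ)) := by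
    intro k
    rw [e2, e2, Efun_conj, ← Efun_add]
    refine Efun_congr ?_
    push_cast
    simp [ZMod.intCast_cast, ZMod.natCast_val]
    ring
  simp only [h1]
  rw [sum_Efun]
  by_cases h : i = j <;> simp [h, sub_eq_zero, eq_comm]

lemma mul_conj_self (z : ℂ) : z * (starRingEnd ℂ) z = ((‖z‖ ^ 2 : ℝ) : ℂ) := by
  rw [Complex.mul_conj]
  norm_cast
  rw [Complex.normSq_eq_norm_sq]

/-- Discrete Parseval identity. -/
lemma pars {N : ℕ} [NeZero N] (g : ZMod N → ℂ) :
    ∑ k : ZMod N, ‖∑ i : ZMod N, (starRingEnd ℂ) (e2 N k i) * g i‖ ^ 2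
      = N * ∑ i : ZMod N, ‖g i‖ ^ 2 := by
  set S : ZMod N → ℂ := fun k => ∑ i : ZMod N, (starRingEnd ℂ) (e2 N k i) * g i with hS
  have key : ∑ k : ZMod N, S k * (starRingEnd ℂ) (S k)
      = (N : ℂ) * ∑ i : ZMod N, g i * (starRingEnd ℂ) (g i) := by
    have step1 : ∀ k : ZMod N, S k * (starRingEnd ℂ) (S k)
        = ∑ i : ZMod N, ∑ j : ZMod N,
            ((starRingEnd ℂ) (e2 N k i) * e2 N k j) * (g i * (starRingEnd ℂ) (g j)) := by
      intro k
      rw [hS]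
      simp only [map_sum, Finset.sum_mul_sum]
      refine Finset.sum_congr rfl fun i _ => Finset.sum_congr rfl fun j _ => ?_
      simp only [map_mul, Complex.conj_conj]
      ring
    calc ∑ k : ZMod N, S k * (starRingEnd ℂ) (S k)
        = ∑ k : ZMod N, ∑ i : ZMod N, ∑ j : ZMod N,
            ((starRingEnd ℂ) (e2 N k i) * e2 N k j) * (g i * (starRingEnd ℂ) (g j)) :=
          Finset.sum_congr rfl fun k _ => step1 k
      _ = ∑ i : ZMod N, ∑ j : ZMod N,
            (∑ k : ZMod N, (starRingEnd ℂ) (e2 N k i) * e2 N k j)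
              * (g i * (starRingEnd ℂ) (g j)) := by
          rw [Finset.sum_comm]
          refine Finset.sum_congr rfl fun i _ => ?_
          rw [Finset.sum_comm]
          refine Finset.sum_congr rfl fun j _ => ?_
          rw [Finset.sum_mul]
      _ = ∑ i : ZMod N, (N : ℂ) * (g i * (starRingEnd ℂ) (g i)) := by
          refine Finset.sum_congr rfl fun i _ => ?_
          simp only [orth, ite_mul, zero_mul]
          rw [Finset.sum_ite_eq]
          simp
      _ = (N : ℂ) * ∑ i : ZMod N, g i * (starRingEnd ℂ) (g i) := by
          rw [Finset.mul_sum]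
  simp only [mul_conj_self] at key
  exact_mod_cast key

lemma exp_kval {L : ℝ} (hL : L ≠ 0) {N : ℕ} [NeZero N] (j i : ZMod N) :
    Complex.exp (-Complex.I * (kval L N j : ℂ) * ((gridX L N i : ℝ) : ℂ))
      = (starRingEnd ℂ) (e2 N j i) := by
  have hNc : (N : ℂ) ≠ 0 := Nat.cast_ne_zero.2 (NeZero.ne N)
  have hLc : (L : ℂ) ≠ 0 := by exact_mod_cast hL
  set n : ℤ := if (ZMod.val j : ℤ) ≤ (N : ℤ) / 2 then (ZMod.val j : ℤ)
    else (ZMod.val j : ℤ) - (N : ℤ) with hn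
  have h0 : kval L N j = (n : ℝ) * (2 * Real.pi / L) := by
    rw [kval, hn]; split_ifs <;> push_cast <;> ring
  have h1 : Complex.exp (-Complex.I * (kval L N j : ℂ) * ((gridX L N i : ℝ) : ℂ))
      = Efun N (-(n * (ZMod.val i : ℤ))) := by
    rw [Efun]
    congr 1
    rw [h0, gridX]
    push_cast
    field_simp
  rw [h1, e2, Efun_conj]
  refine Efun_congr ?_
  push_cast
  have hnj : ((n : ZMod N)) = (ZMod.val j : ZMod N) := by
    rw [hn]
    split_ifs
    · exact Int.cast_natCast _
    · push_cast; simp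
  rw [ZMod.natCast_val, ZMod.cast_id] at hnj
  rw [hnj]
  simp [ZMod.natCast_val, ZMod.cast_id]

variable {N : ℕ} [NeZero N]

/-- Pack a lattice function into `EuclideanSpace`. -/
def pack (f : ZMod N → ℂ) : EuclideanSpace ℂ (ZMod N) := (WithLp.equiv 2 _).symm f

lemma pack_sub (f g : ZMod N → ℂ) : pack (f - g) = pack f - pack g := rfl
lemma pack_smul (c : ℂ) (f : ZMod N → ℂ) : pack (c • f) = c • pack f := rfl

lemma wnorm_eq (w : ℝ) (hw : 0 ≤ w) (f : ZMod N → ℂ) :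
    wnorm w f = Real.sqrt w * ‖pack f‖ := by
  rw [wnorm, EuclideanSpace.norm_eq, ← Real.sqrt_mul hw]
  rfl

lemma wnorm_nonneg (w : ℝ) (f : ZMod N → ℂ) : 0 ≤ wnorm w f := Real.sqrt_nonneg _

lemma wnorm_smul (w : ℝ) (hw : 0 ≤ w) (c : ℂ) (f : ZMod N → ℂ) :
    wnorm w (c • f) = ‖c‖ * wnorm w f := by
  rw [wnorm_eq w hw, wnorm_eq w hw, pack_smul, norm_smul]
  ring

lemma wnorm_triple (w : ℝ) (hw : 0 ≤ w) (a b c : ZMod N → ℂ) :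
    wnorm w (a - b - c) ≤ wnorm w a + wnorm w b + wnorm w c := by
  rw [wnorm_eq w hw, wnorm_eq w hw, wnorm_eq w hw, wnorm_eq w hw, pack_sub, pack_sub]
  have h1 : ‖pack a - pack b - pack c‖ ≤ ‖pack a‖ + ‖pack b‖ + ‖pack c‖ :=
    (norm_sub_le _ _).trans (by
      have := norm_sub_le (pack a) (pack b)
      linarith)
  nlinarith [Real.sqrt_nonneg w, norm_nonneg (pack a), norm_nonneg (pack b),
    norm_nonneg (pack c), norm_nonneg (pack a - pack b - pack c)]

end Aux
-- appended to full.lean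
theorem stmt_17 (L : ℝ) (N : ℕ) [NeZero N] (hL : 1 ≤ L) (hN : Even N) (hdx : L / N ≤ 1)
    (hh : ZMod N → ℝ) (V : ZMod N → ℝ) (lam : ℂ) (M : ℝ)
    (Gh : Matrix (ZMod N) (ZMod N) ℂ)
    (hG1 : Gh * (lam • (1 : Matrix (ZMod N) (ZMod N) ℂ) - Hmat L hh V) = 1)
    (hG2 : (lam • (1 : Matrix (ZMod N) (ZMod N) ℂ) - Hmat L hh V) * Gh = 1)
    (hM : ∀ v : ZMod N → ℂ,
      wnorm (2 * Real.pi / L) (Gh.mulVec v) ≤ M * wnorm (2 * Real.pi / L) v) :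
    ∀ v : ZMod N → ℂ,
      wnorm (2 * Real.pi / L)
          ((Gh * Matrix.diagonal fun k => 1 + ((hh k : ℝ) : ℂ)).mulVec v) ≤
        (1 + M * (‖1 + lam‖ + Real.sqrt (2 * Real.pi) * (⨆ i : ZMod N, |V i|))) *
          wnorm (2 * Real.pi / L) v := by
  intro v
  have hL0 : (0 : ℝ) < L := lt_of_lt_of_le one_pos hL
  set w : ℝ := 2 * Real.pi / L with hw_def
  have hw : 0 < w := by positivity
  have hNpos : 0 < N := Nat.pos_of_ne_zero (NeZero.ne N)
  have hNc : (N : ℂ) ≠ 0 := Nat.cast_ne_zero.2 (NeZero.ne N)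
  have hNr : (0 : ℝ) < N := by exact_mod_cast hNpos
  set K : Matrix (ZMod N) (ZMod N) ℂ :=
    Matrix.of (fun k l => ((1 / L : ℝ) : ℂ) * dft L (fun i => (V i : ℂ)) (k - l)) with hK
  set sV : ℝ := ⨆ i : ZMod N, |V i| with hsV
  have hsVle : ∀ i : ZMod N, |V i| ≤ sV := fun i =>
    le_ciSup (f := fun j : ZMod N => |V j|) (Set.Finite.bddAbove (Set.finite_range _)) i
  have hsV0 : 0 ≤ sV := le_trans (abs_nonneg (V 0)) (hsVle 0)
  -- M is nonnegative
  have hM0 : 0 ≤ M := by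
    have h1 := hM (fun _ => 1)
    have h2 : 0 < wnorm w (fun _ : ZMod N => (1 : ℂ)) := by
      rw [wnorm]
      apply Real.sqrt_pos.2
      have : ∑ i : ZMod N, ‖(1 : ℂ)‖ ^ 2 = (N : ℝ) := by
        simp only [norm_one, one_pow, Finset.sum_const, Finset.card_univ, ZMod.card,
          nsmul_eq_mul, mul_one]
      rw [this]
      positivity
    nlinarith [wnorm_nonneg w (Gh.mulVec (fun _ : ZMod N => (1 : ℂ)))]
  -- matrix algebra
  have hHm : Hmat L hh V = Matrix.diagonal (fun k => ((hh k : ℝ) : ℂ)) + K := by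
    ext k l
    by_cases h : k = l <;>
      simp [Hmat, Matrix.diagonal_apply, Matrix.add_apply, h, hK]
  have hGD : Gh * Matrix.diagonal (fun k => 1 + ((hh k : ℝ) : ℂ))
      = (1 + lam) • Gh - 1 - Gh * K := by
    have hD : (Matrix.diagonal fun k => 1 + ((hh k : ℝ) : ℂ)) =
        (1 + lam) • (1 : Matrix (ZMod N) (ZMod N) ℂ)
          - (lam • (1 : Matrix (ZMod N) (ZMod N) ℂ) - Hmat L hh V) - K := by
      rw [hHm]
      ext k l
      by_cases h : k = l <;>
        simp [Matrix.diagonal_apply, h, Matrix.one_apply, Matrix.smul_apply,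
          Matrix.sub_apply, Matrix.add_apply] <;> ring
    rw [hD, mul_sub, mul_sub, hG1, Matrix.mul_smul, mul_one]
  have hvec : (Gh * Matrix.diagonal fun k => 1 + ((hh k : ℝ) : ℂ)).mulVec v
      = (1 + lam) • Gh.mulVec v - v - Gh.mulVec (K.mulVec v) := by
    rw [hGD, Matrix.sub_mulVec, Matrix.sub_mulVec, Matrix.smul_mulVec,
      Matrix.one_mulVec, ← Matrix.mulVec_mulVec]
  -- the multiplication bound for K
  have hKb : wnorm w (K.mulVec v) ≤ sV * wnorm w v := by
    set F : ZMod N → ℂ := fun i => ∑ l : ZMod N, e2 N i l * v l with hF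
    have hdft : ∀ m : ZMod N, ((1 / L : ℝ) : ℂ) * dft L (fun i => (V i : ℂ)) m
        = (N : ℂ)⁻¹ * ∑ i : ZMod N, (starRingEnd ℂ) (e2 N m i) * ((V i : ℝ) : ℂ) := by
      intro m
      rw [dft]
      simp only [exp_kval hL0.ne']
      rw [← mul_assoc]
      congr 1
      have hLc : (L : ℂ) ≠ 0 := by exact_mod_cast hL0.ne'
      push_cast
      field_simp
    have hsplit : ∀ k l i : ZMod N, (starRingEnd ℂ) (e2 N (k - l) i)
        = (starRingEnd ℂ) (e2 N k i) * e2 N l i := by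
      intro k l i
      rw [e2, e2, e2, Efun_conj, Efun_conj, ← Efun_add]
      refine Efun_congr ?_
      push_cast
      simp [ZMod.intCast_cast, ZMod.natCast_val]
      ring
    have hKv : ∀ k : ZMod N, K.mulVec v k
        = (N : ℂ)⁻¹ * ∑ i : ZMod N,
            (starRingEnd ℂ) (e2 N k i) * (((V i : ℝ) : ℂ) * F i) := by
      intro k
      have e0 : K.mulVec v k
          = ∑ l : ZMod N, (((1 / L : ℝ) : ℂ) * dft L (fun i => (V i : ℂ)) (k - l)) * v l := rfl
      rw [e0]
      have e1 : ∀ l : ZMod N,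
          (((1 / L : ℝ) : ℂ) * dft L (fun i => (V i : ℂ)) (k - l)) * v l
          = (N : ℂ)⁻¹ * ∑ i : ZMod N,
              ((starRingEnd ℂ) (e2 N k i) * (((V i : ℝ) : ℂ) * (e2 N i l * v l))) := by
        intro l
        rw [hdft (k - l), mul_assoc, Finset.sum_mul]
        congr 1
        refine Finset.sum_congr rfl fun i _ => ?_
        rw [hsplit k l i, e2_symm N l i]
        ring
      simp only [e1]
      rw [← Finset.mul_sum]
      congr 1
      rw [Finset.sum_comm]
      refine Finset.sum_congr rfl fun i _ => ?_
      simp only [hF, Finset.mul_sum]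
    -- Parseval for F
    have hFrw : ∀ i : ZMod N, F i = ∑ l : ZMod N, (starRingEnd ℂ) (e2 N i l) * v (-l) := by
      intro i
      rw [hF]
      exact (Fintype.sum_equiv (Equiv.neg (ZMod N))
        (fun l => (starRingEnd ℂ) (e2 N i l) * v (-l)) (fun l => e2 N i l * v l)
        (fun l => by simp [e2_neg])).symm
    have hFpar : ∑ i : ZMod N, ‖F i‖ ^ 2 = N * ∑ l : ZMod N, ‖v l‖ ^ 2 := by
      simp only [hFrw]
      rw [pars (fun l => v (-l))]
      congr 1
      exact Fintype.sum_equiv (Equiv.neg (ZMod N)) _ _ (fun l => by simp)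
    -- sum bound
    have hsum : ∑ k : ZMod N, ‖K.mulVec v k‖ ^ 2 ≤ sV ^ 2 * ∑ l : ZMod N, ‖v l‖ ^ 2 := by
      have h1 : ∀ k : ZMod N, ‖K.mulVec v k‖ ^ 2
          = ((N : ℝ)⁻¹) ^ 2 * ‖∑ i : ZMod N,
              (starRingEnd ℂ) (e2 N k i) * (((V i : ℝ) : ℂ) * F i)‖ ^ 2 := by
        intro k
        rw [hKv k, norm_mul, mul_pow]
        congr 2
        simp
      calc ∑ k : ZMod N, ‖K.mulVec v k‖ ^ 2
          = ((N : ℝ)⁻¹) ^ 2 * ∑ k : ZMod N, ‖∑ i : ZMod N,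
              (starRingEnd ℂ) (e2 N k i) * (((V i : ℝ) : ℂ) * F i)‖ ^ 2 := by
            rw [Finset.mul_sum]; exact Finset.sum_congr rfl fun k _ => h1 k
        _ = ((N : ℝ)⁻¹) ^ 2 * ((N : ℝ) * ∑ i : ZMod N, ‖((V i : ℝ) : ℂ) * F i‖ ^ 2) := by
            rw [pars (fun i => ((V i : ℝ) : ℂ) * F i)]
        _ ≤ ((N : ℝ)⁻¹) ^ 2 * ((N : ℝ) * ∑ i : ZMod N, sV ^ 2 * ‖F i‖ ^ 2) := by
            have hterm : ∀ i : ZMod N, ‖((V i : ℝ) : ℂ) * F i‖ ^ 2 ≤ sV ^ 2 * ‖F i‖ ^ 2 := by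
              intro i
              rw [norm_mul, mul_pow, Complex.norm_real, Real.norm_eq_abs]
              have h2 : |V i| ^ 2 ≤ sV ^ 2 := by
                have := hsVle i
                nlinarith [abs_nonneg (V i)]
              nlinarith [sq_nonneg (‖F i‖)]
            gcongr with i hi
            exact hterm i
        _ = ((N : ℝ)⁻¹) ^ 2 * ((N : ℝ) * (sV ^ 2 * (N * ∑ l : ZMod N, ‖v l‖ ^ 2))) := by
            rw [← Finset.mul_sum, hFpar]
        _ = sV ^ 2 * ∑ l : ZMod N, ‖v l‖ ^ 2 := by
            field_simp
    -- conclude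
    rw [wnorm, wnorm]
    have step : w * ∑ k : ZMod N, ‖K.mulVec v k‖ ^ 2
        ≤ sV ^ 2 * (w * ∑ l : ZMod N, ‖v l‖ ^ 2) := by nlinarith
    calc Real.sqrt (w * ∑ k : ZMod N, ‖K.mulVec v k‖ ^ 2)
        ≤ Real.sqrt (sV ^ 2 * (w * ∑ l : ZMod N, ‖v l‖ ^ 2)) := Real.sqrt_le_sqrt step
      _ = sV * Real.sqrt (w * ∑ l : ZMod N, ‖v l‖ ^ 2) := by
          rw [Real.sqrt_mul (sq_nonneg sV), Real.sqrt_sq hsV0]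
  -- assemble
  have habs : ‖1 + lam‖ = ‖1 + lam‖ := rfl
  have hn1 : wnorm w ((1 + lam) • Gh.mulVec v) ≤ ‖1 + lam‖ * (M * wnorm w v) := by
    rw [wnorm_smul w hw.le]
    exact mul_le_mul_of_nonneg_left (hM v) (norm_nonneg _)
  have hn3 : wnorm w (Gh.mulVec (K.mulVec v)) ≤ M * (sV * wnorm w v) := by
    refine (hM (K.mulVec v)).trans ?_
    exact mul_le_mul_of_nonneg_left hKb hM0
  have htri := wnorm_triple w hw.le ((1 + lam) • Gh.mulVec v) v (Gh.mulVec (K.mulVec v))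
  rw [← hvec] at htri
  have hsqrt : (1 : ℝ) ≤ Real.sqrt (2 * Real.pi) := by
    rw [show (1 : ℝ) = Real.sqrt 1 from (Real.sqrt_one).symm]
    exact Real.sqrt_le_sqrt (by nlinarith [Real.pi_gt_three])
  have hnv := wnorm_nonneg w v
  rw [habs]
  nlinarith [mul_le_mul_of_nonneg_left hnv (mul_nonneg hM0 (mul_nonneg (sub_nonneg.2 hsqrt) hsV0))]
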